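/- Let M be a matrix over ℝ whose rows are indexed by a set R and columns by a set C with |C| ≤ |R|. If the bipartite graph on R ⊔ C with an edge (r,c) whenever M_{rc} ≠ 0 admits a matching covering C, then for a generic choice of the nonzero entries (i.e., outside a set of Lebesgue measure zero in the space of entry values), M has full column rank. -/

import Mathlib

open Matrix MeasureTheory

lemma aux_vol_zero_fin :
    ∀ (n : ℕ) (P : MvPolynomial (Fin n) ℝ), P ≠ 0 →
      volume {x : Fin n → ℝ | MvPolynomial.eval x P = 0} = 0 := by
  intro n
  induction n with
  | zero =>
    intro P hP
    obtain ⟨a, rfl⟩ := MvPolynomial.C_surjective (Fin 0) P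
    have ha : a ≠ 0 := fun h => hP (by simp [h])
    have : {x : Fin 0 → ℝ | MvPolynomial.eval x (MvPolynomial.C a) = 0} = ∅ := by
      ext x; simp [ha]
    rw [this]
    exact measure_empty
  | succ n ih =>
    intro P hP
    set Q := MvPolynomial.finSuccEquiv ℝ n P with hQdef
    have hQ : Q ≠ 0 := by
      intro h
      exact hP ((map_eq_zero_iff _ (AlgEquiv.injective _)).1 h)
    obtain ⟨k, hk⟩ : ∃ k, Q.coeff k ≠ 0 := by
      by_contra h
      push_neg at h
      exact hQ (Polynomial.ext fun k => by simp [h k])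
    -- key continuity
    have hcont : Continuous fun p : ℝ × (Fin n → ℝ) =>
        Polynomial.eval p.1 (Polynomial.map (MvPolynomial.eval p.2) Q) := by
      have h1 : Continuous fun p : ℝ × (Fin n → ℝ) =>
          (Fin.cons p.1 p.2 : Fin (n+1) → ℝ) := by
        apply continuous_pi
        intro i
        refine Fin.cases ?_ ?_ i
        · simpa using continuous_fst
        · intro j; simpa [Function.comp_def] using (continuous_apply j).comp continuous_snd
      have h2 := (MvPolynomial.continuous_eval (p := P)).comp h1
      have : (fun p : ℝ × (Fin n → ℝ) =>
          Polynomial.eval p.1 (Polynomial.map (MvPolynomial.eval p.2) Q)) =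
          fun p => MvPolynomial.eval (Fin.cons p.1 p.2) P := by
        funext p
        rw [MvPolynomial.eval_eq_eval_mv_eval']
      rw [this]
      exact h2
    set S₂ : Set (ℝ × (Fin n → ℝ)) :=
      {p | Polynomial.eval p.1 (Polynomial.map (MvPolynomial.eval p.2) Q) = 0} with hS₂
    have hS₂meas : MeasurableSet S₂ :=
      (isClosed_singleton.preimage hcont).measurableSet
    set S₃ : Set ((Fin n → ℝ) × ℝ) :=
      {p | Polynomial.eval p.2 (Polynomial.map (MvPolynomial.eval p.1) Q) = 0} with hS₃
    have hS₃meas : MeasurableSet S₃ := by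
      have : S₃ = Prod.swap ⁻¹' S₂ := by ext p; simp [hS₂, hS₃, Prod.swap]
      rw [this]
      exact hS₂meas.preimage measurable_swap
    -- step 1 : transfer from Fin (n+1) → ℝ to ℝ × (Fin n → ℝ)
    have e := MeasureTheory.volume_preserving_piFinSuccAbove (fun _ : Fin (n+1) => ℝ) 0
    have hpre : (MeasurableEquiv.piFinSuccAbove (fun _ : Fin (n+1) => ℝ) 0) ⁻¹' S₂ =
        {x : Fin (n+1) → ℝ | MvPolynomial.eval x P = 0} := by
      ext x
      have hx : (Fin.cons (x 0) (Fin.tail x) : Fin (n+1) → ℝ) = x := Fin.cons_self_tail x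
      have happ : (MeasurableEquiv.piFinSuccAbove (fun _ : Fin (n+1) => ℝ) 0) x =
          (x 0, Fin.tail x) := by
        refine Prod.ext rfl ?_
        funext j
        show x (Fin.succAbove 0 j) = x j.succ
        rw [Fin.succAbove_zero]
      simp only [Set.mem_preimage, hS₂, Set.mem_setOf_eq, happ]
      rw [← MvPolynomial.eval_eq_eval_mv_eval', hx]
    have step1 : volume {x : Fin (n+1) → ℝ | MvPolynomial.eval x P = 0} = volume S₂ := by
      rw [← hpre]
      exact e.measure_preimage hS₂meas.nullMeasurableSet
    -- step 2 : swap
    have hswapPre : (Prod.swap : (Fin n → ℝ) × ℝ → ℝ × (Fin n → ℝ)) ⁻¹' S₂ = S₃ := by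
      ext p; simp [hS₂, hS₃, Prod.swap]
    have step2 : volume S₂ = volume S₃ := by
      have hsw : MeasurePreserving (Prod.swap : (Fin n → ℝ) × ℝ → ℝ × (Fin n → ℝ))
          volume volume := by
        rw [Measure.volume_eq_prod, Measure.volume_eq_prod]
        exact Measure.measurePreserving_swap
      rw [← hsw.measure_preimage hS₂meas.nullMeasurableSet, hswapPre]
    -- step 3 : Fubini
    have step3 : volume S₃ = 0 := by
      rw [Measure.volume_eq_prod,
        Measure.measure_prod_null hS₃meas]
      have hbad : volume {y : Fin n → ℝ | MvPolynomial.eval y (Q.coeff k) = 0} = 0 :=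
        ih (Q.coeff k) hk
      filter_upwards [(measure_eq_zero_iff_ae_notMem.1 hbad)] with y hy
      have hQy : Polynomial.map (MvPolynomial.eval y) Q ≠ 0 := by
        intro h
        apply hy
        have := congrArg (fun q => Polynomial.coeff q k) h
        simpa [Polynomial.coeff_map] using this
      have hfin : Set.Finite {t : ℝ |
          Polynomial.eval t (Polynomial.map (MvPolynomial.eval y) Q) = 0} :=
        Polynomial.finite_setOf_isRoot hQy
      have : (Prod.mk y ⁻¹' S₃) =
          {t : ℝ | Polynomial.eval t (Polynomial.map (MvPolynomial.eval y) Q) = 0} := by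
        ext t; simp [hS₃]
      rw [this]
      exact hfin.measure_zero _
    rw [step1, step2, step3]

lemma aux_vol_zero {ι : Type} [Fintype ι] (P : MvPolynomial ι ℝ) (hP : P ≠ 0) :
    volume {x : ι → ℝ | MvPolynomial.eval x P = 0} = 0 := by
  classical
  set e : ι ≃ Fin (Fintype.card ι) := Fintype.equivFin ι with he
  set Q : MvPolynomial (Fin (Fintype.card ι)) ℝ := MvPolynomial.rename e P with hQ
  have hQne : Q ≠ 0 := fun h => hP (MvPolynomial.rename_injective e e.injective (by simpa using h))
  have hfin := aux_vol_zero_fin (Fintype.card ι) Q hQne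
  have hmp := MeasureTheory.volume_measurePreserving_piCongrLeft (fun _ : ι => ℝ) e.symm
  have hmeas : MeasurableSet {x : ι → ℝ | MvPolynomial.eval x P = 0} :=
    (isClosed_singleton.preimage (MvPolynomial.continuous_eval (p := P))).measurableSet
  have hpre : (MeasurableEquiv.piCongrLeft (fun _ : ι => ℝ) e.symm) ⁻¹'
      {x : ι → ℝ | MvPolynomial.eval x P = 0} =
      {x : Fin (Fintype.card ι) → ℝ | MvPolynomial.eval x Q = 0} := by
    ext x
    simp only [Set.mem_preimage, Set.mem_setOf_eq, hQ, MvPolynomial.eval_rename]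
    have hfe : ((MeasurableEquiv.piCongrLeft (fun _ : ι => ℝ) e.symm) x : ι → ℝ)
        = x ∘ e := by
      funext z
      have h1 := MeasurableEquiv.piCongrLeft_apply_apply e.symm (β := fun _ : ι => ℝ) x (e z)
      simpa using h1
    rw [hfe]
  rw [← hmp.measure_preimage hmeas.nullMeasurableSet, hpre]
  exact hfin

/-- If the zero pattern of M admits a matching covering the columns, then for
almost every (Lebesgue) choice of the nonzero entries, M has full column rank. -/
theorem stmt_6 (R C : Type) [Fintype R] [Fintype C] [DecidableEq R] [DecidableEq C]
    (hcard : Fintype.card C ≤ Fintype.card R)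
    (Z : R → C → Prop) [∀ r c, Decidable (Z r c)]
    (m : C → R) (hm : Function.Injective m) (hcov : ∀ c, Z (m c) c)
    (M : ({p : R × C // Z p.1 p.2} → ℝ) → Matrix R C ℝ)
    (hM : ∀ a r c, M a r c = if h : Z r c then a ⟨(r, c), h⟩ else 0) :
    volume {a : {p : R × C // Z p.1 p.2} → ℝ |
      ¬ Function.Injective (M a).mulVec} = 0 := by
  classical
  -- the symbolic square submatrix on rows m(C)
  set Xmat : Matrix C C (MvPolynomial {p : R × C // Z p.1 p.2} ℝ) :=
    Matrix.of fun c' c => if h : Z (m c') c then MvPolynomial.X ⟨(m c', c), h⟩ else 0 with hXmat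
  set P : MvPolynomial {p : R × C // Z p.1 p.2} ℝ := Xmat.det with hP
  -- evaluation of P gives the determinant of the submatrix
  have keyEval : ∀ a : {p : R × C // Z p.1 p.2} → ℝ,
      MvPolynomial.eval a P = (Matrix.of fun c' c => M a (m c') c : Matrix C C ℝ).det := by
    intro a
    rw [hP, RingHom.map_det]
    congr 1
    funext c' c
    simp only [RingHom.mapMatrix_apply, Matrix.map_apply, hXmat, Matrix.of_apply]
    rw [hM]
    split
    · simp
    · simp
  -- P is nonzero: evaluate at the indicator of the matching
  have hPne : P ≠ 0 := by
    intro h0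
    set a₀ : {p : R × C // Z p.1 p.2} → ℝ :=
      fun p => if p.1.1 = m p.1.2 then 1 else 0 with ha₀
    have h1 : MvPolynomial.eval a₀ P = 1 := by
      rw [keyEval a₀]
      have : (Matrix.of fun c' c => M a₀ (m c') c : Matrix C C ℝ) = 1 := by
        funext c' c
        show M a₀ (m c') c = (1 : Matrix C C ℝ) c' c
        rw [hM]
        by_cases hcc : c' = c
        · subst hcc
          simp [hcov c', ha₀, Matrix.one_apply]
        · have hne : m c' ≠ m c := fun h => hcc (hm h)
          split
          · simp [ha₀, hne, Matrix.one_apply, hcc]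
          · simp [Matrix.one_apply, hcc]
      rw [this, Matrix.det_one]
    rw [h0] at h1
    simp at h1
  -- the bad set is contained in the zero locus of P
  have hsub : {a : {p : R × C // Z p.1 p.2} → ℝ | ¬ Function.Injective (M a).mulVec} ⊆
      {a : {p : R × C // Z p.1 p.2} → ℝ | MvPolynomial.eval a P = 0} := by
    intro a ha
    by_contra hdet
    apply ha
    have hdet' : IsUnit (Matrix.of fun c' c => M a (m c') c : Matrix C C ℝ).det := by
      rw [← keyEval a]
      exact Ne.isUnit hdet
    have hinjN : Function.Injective
        ((Matrix.of fun c' c => M a (m c') c : Matrix C C ℝ)).mulVec :=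
      Matrix.mulVec_injective_iff_isUnit.2 ((Matrix.isUnit_iff_isUnit_det _).2 hdet')
    intro u v huv
    apply hinjN
    funext c'
    have := congrFun huv (m c')
    simpa [Matrix.mulVec, dotProduct] using this
  exact measure_mono_null hsub (aux_vol_zero P hPne)
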